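/- Full Proposition 1: with Y_i, clusters g(·), t(·), time aggregates y_t := Σ_{i: t(i)=t} Y_i, bandwidth M ≤ T−1, and kernel weights ω(m, M) ≥ 0, the matrix V_con − V_adj is positive semidefinite, where V_con := Σ_i Σ_{j: g(j)=g(i)} E[Y_i Y_j′] + Σ_i Σ_{j: t(j)=t(i)} E[Y_i Y_j′] + Σ_{m=1}^M ω(m,M)(Σ_{t=1}^{T−m} E[y_t y_{t+m}′] + Σ_{t=1}^{T−m} E[y_{t+m} y_t′] + 2 Σ_{t=1}^T E[y_t y_t′]) and V_adj := Σ_i Σ_{j: g(j)=g(i)} Cov(Y_i,Y_j) + Σ_i Σ_{j: t(j)=t(i)} Cov(Y_i,Y_j) − Σ_i Σ_{j: g(j)=g(i), t(j)=t(i)} Cov(Y_i,Y_j) + Σ_{m=1}^M ω(m,M)(Σ_{t=1}^{T−m} Cov(y_t, y_{t+m}) + Σ_{t=1}^{T−m} Cov(y_{t+m}, y_t)). -/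

import Mathlib

open MeasureTheory

/-- Uncentered second moment matrix `E[X Y']` of two random vectors. -/
noncomputable def m2Mat {Ω : Type*} [MeasurableSpace Ω] (μ : Measure Ω) {v : ℕ}
    (X Y : Ω → Fin v → ℝ) : Matrix (Fin v) (Fin v) ℝ :=
  Matrix.of fun a b => ∫ ω, X ω a * Y ω b ∂μ

/-- Covariance matrix `Cov(X, Y) = E[(X - EX)(Y - EY)']` of two random vectors. -/
noncomputable def covMat {Ω : Type*} [MeasurableSpace Ω] (μ : Measure Ω) {v : ℕ}
    (X Y : Ω → Fin v → ℝ) : Matrix (Fin v) (Fin v) ℝ :=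
  Matrix.of fun a b =>
    ∫ ω, (X ω a - ∫ x, X x a ∂μ) * (Y ω b - ∫ x, Y x b ∂μ) ∂μ

/-- Time aggregate `y_τ := ∑_{i : t(i) = τ} Y_i`. -/
noncomputable def timeAgg {Ω : Type*} {n v : ℕ} (Y : Fin n → Ω → Fin v → ℝ)
    (tA : Fin n → ℕ) (τ : ℕ) : Ω → Fin v → ℝ :=
  fun ω a => ∑ i ∈ Finset.univ.filter (fun i => tA i = τ), Y i ω a

open scoped ENNReal

/-- Mean vector. -/
noncomputable def mV {Ω : Type*} [MeasurableSpace Ω] (μ : Measure Ω) {v : ℕ}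
    (X : Ω → Fin v → ℝ) : Fin v → ℝ := fun a => ∫ ω, X ω a ∂μ

/-- Outer product matrix. -/
def outerM {v : ℕ} (u w : Fin v → ℝ) : Matrix (Fin v) (Fin v) ℝ :=
  Matrix.of fun a b => u a * w b

section Aux
variable {Ω : Type*} [MeasurableSpace Ω] {μ : Measure Ω} [IsProbabilityMeasure μ] {v : ℕ}

lemma mulInt {f g : Ω → ℝ} (hf : MemLp f 2 μ) (hg : MemLp g 2 μ) :
    Integrable (fun ω => f ω * g ω) μ := by
  have h2 : (1 : ℝ≥0∞) / 1 = 1 / 2 + 1 / 2 := by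
    rw [ENNReal.div_add_div_same, one_add_one_eq_two, div_one]
    exact (ENNReal.div_self two_ne_zero ENNReal.ofNat_ne_top).symm
  have := hg.smul (φ := f) hf (r := 1)
  simpa [memLp_one_iff_integrable, smul_eq_mul, Pi.mul_def] using this

lemma intL2 {f : Ω → ℝ} (hf : MemLp f 2 μ) : Integrable f μ :=
  hf.integrable (by norm_num)

lemma int_mul_expand {f g : Ω → ℝ} (hf : MemLp f 2 μ) (hg : MemLp g 2 μ) :
    ∫ ω, (f ω - ∫ x, f x ∂μ) * (g ω - ∫ x, g x ∂μ) ∂μ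
      = (∫ ω, f ω * g ω ∂μ) - (∫ x, f x ∂μ) * (∫ x, g x ∂μ) := by
  set a := ∫ x, f x ∂μ
  set b := ∫ x, g x ∂μ
  have h1 : (fun ω => (f ω - a) * (g ω - b))
      = fun ω => f ω * g ω - a * g ω - b * f ω + a * b := funext fun ω => by ring
  have i1 : Integrable (fun ω => f ω * g ω - a * g ω) μ :=
    (mulInt hf hg).sub ((intL2 hg).const_mul a)
  have i2 : Integrable (fun ω => f ω * g ω - a * g ω - b * f ω) μ :=
    i1.sub ((intL2 hf).const_mul b)
  rw [h1, integral_add i2 (integrable_const _),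
      integral_sub i1 ((intL2 hf).const_mul b),
      integral_sub (mulInt hf hg) ((intL2 hg).const_mul a),
      integral_const_mul, integral_const_mul, integral_const]
  simp [a, b]
  ring

lemma int_sum_mul {ι κ : Type*} (s : Finset ι) (t : Finset κ) (f : ι → Ω → ℝ) (g : κ → Ω → ℝ)
    (hf : ∀ i ∈ s, MemLp (f i) 2 μ) (hg : ∀ j ∈ t, MemLp (g j) 2 μ) :
    ∫ ω, (∑ i ∈ s, f i ω) * (∑ j ∈ t, g j ω) ∂μ
      = ∑ i ∈ s, ∑ j ∈ t, ∫ ω, f i ω * g j ω ∂μ := by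
  have h1 : (fun ω => (∑ i ∈ s, f i ω) * (∑ j ∈ t, g j ω))
      = fun ω => ∑ i ∈ s, ∑ j ∈ t, f i ω * g j ω :=
    funext fun ω => Finset.sum_mul_sum s t _ _
  rw [h1, integral_finset_sum s (fun i hi =>
      integrable_finset_sum t fun j hj => mulInt (hf i hi) (hg j hj))]
  exact Finset.sum_congr rfl fun i hi =>
    integral_finset_sum t fun j hj => mulInt (hf i hi) (hg j hj)

lemma gram_psd (f : Fin v → Ω → ℝ) (hf : ∀ a, MemLp (f a) 2 μ) :
    (Matrix.of fun a b => ∫ ω, f a ω * f b ω ∂μ).PosSemidef := by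
  refine Matrix.PosSemidef.of_dotProduct_mulVec_nonneg ?_ ?_
  · ext a b
    simp only [Matrix.conjTranspose_apply, Matrix.of_apply, star_trivial]
    simp_rw [mul_comm (f b _) (f a _)]
  · intro x
    have key : ∀ a b : Fin v, x a * ((∫ ω, f a ω * f b ω ∂μ) * x b)
        = ∫ ω, (x a * f a ω) * (x b * f b ω) ∂μ := by
      intro a b
      have h1 : (fun ω => (x a * f a ω) * (x b * f b ω))
          = fun ω => (x a * x b) * (f a ω * f b ω) := funext fun ω => by ring
      rw [h1, integral_const_mul]; ring
    simp only [dotProduct, Matrix.mulVec, Pi.star_apply, star_trivial,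
      Matrix.of_apply, dotProduct, Finset.mul_sum]
    simp_rw [key]
    rw [← int_sum_mul Finset.univ Finset.univ _ _
        (fun a _ => (hf a).const_mul (x a)) (fun b _ => (hf b).const_mul (x b))]
    exact integral_nonneg fun ω => mul_self_nonneg _

lemma m2self_psd (X : Ω → Fin v → ℝ) (hX : ∀ a, MemLp (fun ω => X ω a) 2 μ) :
    (m2Mat μ X X).PosSemidef :=
  gram_psd (fun a ω => X ω a) hX

lemma covself_psd (X : Ω → Fin v → ℝ) (hX : ∀ a, MemLp (fun ω => X ω a) 2 μ) :
    (covMat μ X X).PosSemidef :=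
  gram_psd (fun a ω => X ω a - ∫ x, X x a ∂μ)
    (fun a => (hX a).sub (memLp_const _))

lemma outer_psd (u : Fin v → ℝ) : (outerM u u).PosSemidef := by
  refine Matrix.PosSemidef.of_dotProduct_mulVec_nonneg ?_ ?_
  · ext a b
    simp only [outerM, Matrix.conjTranspose_apply, Matrix.of_apply, star_trivial, mul_comm]
  · intro x
    simp only [outerM, dotProduct, Matrix.mulVec, Pi.star_apply, star_trivial,
      Matrix.of_apply, Finset.mul_sum]
    have key : ∀ a b : Fin v, x a * (u a * u b * x b) = (x a * u a) * (x b * u b) :=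
      fun a b => by ring
    simp_rw [key]
    rw [← Finset.sum_mul_sum]
    exact mul_self_nonneg _

lemma psd_add {A B : Matrix (Fin v) (Fin v) ℝ} (hA : A.PosSemidef) (hB : B.PosSemidef) :
    (A + B).PosSemidef :=
  Matrix.PosSemidef.of_dotProduct_mulVec_nonneg (hA.1.add hB.1) fun x => by
    rw [Matrix.add_mulVec, dotProduct_add]
    exact add_nonneg (hA.dotProduct_mulVec_nonneg x) (hB.dotProduct_mulVec_nonneg x)

lemma psd_sum {ι : Type*} (s : Finset ι) (F : ι → Matrix (Fin v) (Fin v) ℝ)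
    (h : ∀ i ∈ s, (F i).PosSemidef) : (∑ i ∈ s, F i).PosSemidef :=
  Finset.sum_induction F _ (fun _ _ ha hb => psd_add ha hb) Matrix.PosSemidef.zero h

lemma psd_smul {A : Matrix (Fin v) (Fin v) ℝ} (hA : A.PosSemidef) {c : ℝ} (hc : 0 ≤ c) :
    (c • A).PosSemidef := by
  refine Matrix.PosSemidef.of_dotProduct_mulVec_nonneg ?_ ?_
  · unfold Matrix.IsHermitian
    rw [Matrix.conjTranspose_smul, hA.1]
    simp
  · intro x
    rw [Matrix.smul_mulVec, dotProduct_smul, smul_eq_mul]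
    exact mul_nonneg hc (hA.dotProduct_mulVec_nonneg x)

lemma m2_eq (X Y : Ω → Fin v → ℝ) (hX : ∀ a, MemLp (fun ω => X ω a) 2 μ)
    (hY : ∀ a, MemLp (fun ω => Y ω a) 2 μ) :
    m2Mat μ X Y = covMat μ X Y + outerM (mV μ X) (mV μ Y) := by
  ext a b
  simp only [m2Mat, covMat, outerM, mV, Matrix.add_apply, Matrix.of_apply]
  rw [int_mul_expand (hX a) (hY b)]
  ring

lemma m2_sub_cov (X Y : Ω → Fin v → ℝ) (hX : ∀ a, MemLp (fun ω => X ω a) 2 μ)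
    (hY : ∀ a, MemLp (fun ω => Y ω a) 2 μ) :
    m2Mat μ X Y - covMat μ X Y = outerM (mV μ X) (mV μ Y) := by
  rw [m2_eq X Y hX hY]; abel

lemma outer_sum {ι κ : Type*} (s : Finset ι) (t : Finset κ) (u : ι → Fin v → ℝ)
    (w : κ → Fin v → ℝ) :
    outerM (∑ i ∈ s, u i) (∑ j ∈ t, w j) = ∑ i ∈ s, ∑ j ∈ t, outerM (u i) (w j) := by
  ext a b
  simp only [outerM, Matrix.of_apply, Matrix.sum_apply, Finset.sum_apply]
  rw [Finset.sum_mul_sum]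

lemma outer_add_add (u u' : Fin v → ℝ) :
    outerM (u + u') (u + u')
      = outerM u u + outerM u u' + outerM u' u + outerM u' u' := by
  ext a b
  simp only [outerM, Matrix.of_apply, Matrix.add_apply, Pi.add_apply]
  ring

lemma mV_sum {ι : Type*} (s : Finset ι) (Z : ι → Ω → Fin v → ℝ)
    (hZ : ∀ i ∈ s, ∀ a, MemLp (fun ω => Z i ω a) 2 μ) :
    mV μ (fun ω a => ∑ i ∈ s, Z i ω a) = ∑ i ∈ s, mV μ (Z i) := by
  funext a
  simp only [mV, Finset.sum_apply]
  exact integral_finset_sum s fun i hi => intL2 (hZ i hi a)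

lemma m2_sum {ι κ : Type*} (s : Finset ι) (t : Finset κ) (Z : ι → Ω → Fin v → ℝ)
    (W : κ → Ω → Fin v → ℝ)
    (hZ : ∀ i ∈ s, ∀ a, MemLp (fun ω => Z i ω a) 2 μ)
    (hW : ∀ j ∈ t, ∀ a, MemLp (fun ω => W j ω a) 2 μ) :
    m2Mat μ (fun ω a => ∑ i ∈ s, Z i ω a) (fun ω a => ∑ j ∈ t, W j ω a)
      = ∑ i ∈ s, ∑ j ∈ t, m2Mat μ (Z i) (W j) := by
  ext a b
  simp only [m2Mat, Matrix.of_apply, Matrix.sum_apply]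
  exact int_sum_mul s t _ _ (fun i hi => hZ i hi a) (fun j hj => hW j hj b)

lemma memℒp_sumvec {ι : Type*} (s : Finset ι) (Z : ι → Ω → Fin v → ℝ)
    (hZ : ∀ i ∈ s, ∀ a, MemLp (fun ω => Z i ω a) 2 μ) (a : Fin v) :
    MemLp (fun ω => ∑ i ∈ s, Z i ω a) 2 μ :=
  memLp_finset_sum s fun i hi => hZ i hi a

lemma cov_sum {ι κ : Type*} (s : Finset ι) (t : Finset κ) (Z : ι → Ω → Fin v → ℝ)
    (W : κ → Ω → Fin v → ℝ)
    (hZ : ∀ i ∈ s, ∀ a, MemLp (fun ω => Z i ω a) 2 μ)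
    (hW : ∀ j ∈ t, ∀ a, MemLp (fun ω => W j ω a) 2 μ) :
    covMat μ (fun ω a => ∑ i ∈ s, Z i ω a) (fun ω a => ∑ j ∈ t, W j ω a)
      = ∑ i ∈ s, ∑ j ∈ t, covMat μ (Z i) (W j) := by
  have hZS := memℒp_sumvec s Z hZ
  have hWS := memℒp_sumvec t W hW
  have h1 : covMat μ (fun ω a => ∑ i ∈ s, Z i ω a) (fun ω a => ∑ j ∈ t, W j ω a)
      = m2Mat μ (fun ω a => ∑ i ∈ s, Z i ω a) (fun ω a => ∑ j ∈ t, W j ω a)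
        - outerM (mV μ (fun ω a => ∑ i ∈ s, Z i ω a)) (mV μ (fun ω a => ∑ j ∈ t, W j ω a)) := by
    rw [m2_eq _ _ hZS hWS]; abel
  rw [h1, m2_sum s t Z W hZ hW, mV_sum s Z hZ, mV_sum t W hW, outer_sum,
      ← Finset.sum_sub_distrib]
  refine Finset.sum_congr rfl fun i hi => ?_
  rw [← Finset.sum_sub_distrib]
  refine Finset.sum_congr rfl fun j hj => ?_
  rw [m2_eq _ _ (hZ i hi) (hW j hj)]; abel

/-- Regrouping a double sum over a symmetric fiber condition. -/
lemma regroup {ι α M : Type*} [Fintype ι] [DecidableEq α] [AddCommMonoid M]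
    (k : ι → α) (s : Finset α) (hk : ∀ i, k i ∈ s) (F : ι → ι → M) :
    ∑ i, ∑ j ∈ Finset.univ.filter (fun j => k j = k i), F i j
      = ∑ c ∈ s, ∑ i ∈ Finset.univ.filter (fun i => k i = c),
          ∑ j ∈ Finset.univ.filter (fun j => k j = c), F i j := by
  rw [← Finset.sum_fiberwise_of_maps_to (fun i _ => hk i)
      (fun i => ∑ j ∈ Finset.univ.filter (fun j => k j = k i), F i j)]
  refine Finset.sum_congr rfl fun c _ => Finset.sum_congr rfl fun i hi => ?_
  rw [Finset.mem_filter] at hi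
  rw [hi.2]

end Aux

section Main
variable {Ω : Type*} [MeasurableSpace Ω] {μ : Measure Ω} [IsProbabilityMeasure μ] {v : ℕ}

lemma block_psd (X X' : Ω → Fin v → ℝ) (hX : ∀ a, MemLp (fun ω => X ω a) 2 μ)
    (hX' : ∀ a, MemLp (fun ω => X' ω a) 2 μ) :
    (outerM (mV μ X) (mV μ X') + outerM (mV μ X') (mV μ X)
      + (m2Mat μ X X + m2Mat μ X' X')).PosSemidef := by
  have h : outerM (mV μ X) (mV μ X') + outerM (mV μ X') (mV μ X)
      + (m2Mat μ X X + m2Mat μ X' X')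
      = covMat μ X X + covMat μ X' X'
        + outerM (mV μ X + mV μ X') (mV μ X + mV μ X') := by
    rw [m2_eq X X hX hX, m2_eq X' X' hX' hX', outer_add_add]
    abel
  rw [h]
  exact psd_add (psd_add (covself_psd X hX) (covself_psd X' hX'))
    (outer_psd _)

lemma Dpsd (T : ℕ) (y : ℕ → Ω → Fin v → ℝ)
    (hy : ∀ τ, ∀ a, MemLp (fun ω => y τ ω a) 2 μ)
    (m : ℕ) (hm1 : 1 ≤ m) (hm2 : m ≤ T - 1) :
    ((∑ τ ∈ Finset.Icc 1 (T - m), outerM (mV μ (y τ)) (mV μ (y (τ + m))))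
      + (∑ τ ∈ Finset.Icc 1 (T - m), outerM (mV μ (y (τ + m))) (mV μ (y τ)))
      + 2 • ∑ τ ∈ Finset.Icc 1 T, m2Mat μ (y τ) (y τ)).PosSemidef := by
  have hmT : m ≤ T := le_trans hm2 (Nat.sub_le _ _)
  have hsub1 : Finset.Icc 1 (T - m) ⊆ Finset.Icc 1 T :=
    Finset.Icc_subset_Icc_right (Nat.sub_le _ _)
  have hsub2 : Finset.Icc (1 + m) T ⊆ Finset.Icc 1 T :=
    Finset.Icc_subset_Icc_left (by omega)
  have himg : (Finset.Icc 1 (T - m)).image (· + m) = Finset.Icc (1 + m) T := by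
    rw [Finset.image_add_right_Icc, Nat.sub_add_cancel hmT]
  have hQ : ∑ τ ∈ Finset.Icc 1 (T - m), m2Mat μ (y (τ + m)) (y (τ + m))
      = ∑ σ ∈ Finset.Icc (1 + m) T, m2Mat μ (y σ) (y σ) := by
    rw [← himg, Finset.sum_image (by intro a _ b _ h; simp only at h; omega)]
  have h2C : 2 • ∑ τ ∈ Finset.Icc 1 T, m2Mat μ (y τ) (y τ)
      = (∑ τ ∈ Finset.Icc 1 (T - m), m2Mat μ (y τ) (y τ)
          + ∑ τ ∈ Finset.Icc 1 (T - m), m2Mat μ (y (τ + m)) (y (τ + m)))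
        + ((∑ τ ∈ Finset.Icc 1 T \ Finset.Icc 1 (T - m), m2Mat μ (y τ) (y τ))
          + ∑ τ ∈ Finset.Icc 1 T \ Finset.Icc (1 + m) T, m2Mat μ (y τ) (y τ)) := by
    rw [two_smul]
    nth_rewrite 1 [← Finset.sum_sdiff hsub1 (f := fun τ => m2Mat μ (y τ) (y τ))]
    rw [← Finset.sum_sdiff hsub2 (f := fun τ => m2Mat μ (y τ) (y τ)), ← hQ]
    abel
  rw [h2C]
  have hmain : (∑ τ ∈ Finset.Icc 1 (T - m), outerM (mV μ (y τ)) (mV μ (y (τ + m))))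
      + (∑ τ ∈ Finset.Icc 1 (T - m), outerM (mV μ (y (τ + m))) (mV μ (y τ)))
      + ((∑ τ ∈ Finset.Icc 1 (T - m), m2Mat μ (y τ) (y τ)
          + ∑ τ ∈ Finset.Icc 1 (T - m), m2Mat μ (y (τ + m)) (y (τ + m)))
        + ((∑ τ ∈ Finset.Icc 1 T \ Finset.Icc 1 (T - m), m2Mat μ (y τ) (y τ))
          + ∑ τ ∈ Finset.Icc 1 T \ Finset.Icc (1 + m) T, m2Mat μ (y τ) (y τ)))
      = (∑ τ ∈ Finset.Icc 1 (T - m),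
          (outerM (mV μ (y τ)) (mV μ (y (τ + m))) + outerM (mV μ (y (τ + m))) (mV μ (y τ))
            + (m2Mat μ (y τ) (y τ) + m2Mat μ (y (τ + m)) (y (τ + m)))))
        + ((∑ τ ∈ Finset.Icc 1 T \ Finset.Icc 1 (T - m), m2Mat μ (y τ) (y τ))
          + ∑ τ ∈ Finset.Icc 1 T \ Finset.Icc (1 + m) T, m2Mat μ (y τ) (y τ)) := by
    rw [Finset.sum_add_distrib, Finset.sum_add_distrib, Finset.sum_add_distrib]
    abel
  rw [hmain]
  refine psd_add (psd_sum _ _ fun τ _ => block_psd (y τ) (y (τ + m)) (hy τ) (hy (τ + m)))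
    (psd_add (psd_sum _ _ fun τ _ => m2self_psd (y τ) (hy τ))
      (psd_sum _ _ fun τ _ => m2self_psd (y τ) (hy τ)))

end Main

theorem stmt_12 {Ω : Type*} [MeasurableSpace Ω] (μ : Measure Ω) [IsProbabilityMeasure μ]
    (n G T M v : ℕ) (hM : M ≤ T - 1) (Y : Fin n → Ω → Fin v → ℝ)
    (hmem : ∀ i, ∀ a : Fin v, MemLp (fun ω => Y i ω a) 2 μ)
    (g : Fin n → Fin G) (tA : Fin n → ℕ) (htA : ∀ i, tA i ∈ Finset.Icc 1 T)
    (κ : ℕ → ℝ) (hκ : ∀ m, 0 ≤ κ m) :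
    Matrix.PosSemidef
      -- V_con :
      (((∑ i, ∑ j ∈ Finset.univ.filter (fun j => g j = g i), m2Mat μ (Y i) (Y j))
        + (∑ i, ∑ j ∈ Finset.univ.filter (fun j => tA j = tA i), m2Mat μ (Y i) (Y j))
        + ∑ m ∈ Finset.Icc 1 M, κ m •
            ((∑ τ ∈ Finset.Icc 1 (T - m), m2Mat μ (timeAgg Y tA τ) (timeAgg Y tA (τ + m)))
              + (∑ τ ∈ Finset.Icc 1 (T - m), m2Mat μ (timeAgg Y tA (τ + m)) (timeAgg Y tA τ))
              + 2 • ∑ τ ∈ Finset.Icc 1 T, m2Mat μ (timeAgg Y tA τ) (timeAgg Y tA τ)))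
      -- minus V_adj :
      - ((∑ i, ∑ j ∈ Finset.univ.filter (fun j => g j = g i), covMat μ (Y i) (Y j))
        + (∑ i, ∑ j ∈ Finset.univ.filter (fun j => tA j = tA i), covMat μ (Y i) (Y j))
        - (∑ i, ∑ j ∈ Finset.univ.filter (fun j => g j = g i ∧ tA j = tA i),
            covMat μ (Y i) (Y j))
        + ∑ m ∈ Finset.Icc 1 M, κ m •
            ((∑ τ ∈ Finset.Icc 1 (T - m), covMat μ (timeAgg Y tA τ) (timeAgg Y tA (τ + m)))
              + (∑ τ ∈ Finset.Icc 1 (T - m),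
                  covMat μ (timeAgg Y tA (τ + m)) (timeAgg Y tA τ))))) := by
  
  have hy : ∀ τ, ∀ a : Fin v, MemLp (fun ω => timeAgg Y tA τ ω a) 2 μ := fun τ a =>
    memLp_finset_sum _ fun i _ => hmem i a
  -- E1 : group term
  have hE1 : (∑ i, ∑ j ∈ Finset.univ.filter (fun j => g j = g i), m2Mat μ (Y i) (Y j))
      - (∑ i, ∑ j ∈ Finset.univ.filter (fun j => g j = g i), covMat μ (Y i) (Y j))
      = ∑ c : Fin G, outerM (∑ i ∈ Finset.univ.filter (fun i => g i = c), mV μ (Y i))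
          (∑ i ∈ Finset.univ.filter (fun i => g i = c), mV μ (Y i)) := by
    rw [← Finset.sum_sub_distrib]
    have h1 : ∀ i : Fin n,
        (∑ j ∈ Finset.univ.filter (fun j => g j = g i), m2Mat μ (Y i) (Y j))
          - (∑ j ∈ Finset.univ.filter (fun j => g j = g i), covMat μ (Y i) (Y j))
          = ∑ j ∈ Finset.univ.filter (fun j => g j = g i),
              outerM (mV μ (Y i)) (mV μ (Y j)) := by
      intro i
      rw [← Finset.sum_sub_distrib]
      exact Finset.sum_congr rfl fun j _ => m2_sub_cov _ _ (hmem i) (hmem j)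
    rw [Finset.sum_congr rfl fun i _ => h1 i,
        regroup g Finset.univ (fun i => Finset.mem_univ _)
          (fun i j => outerM (mV μ (Y i)) (mV μ (Y j)))]
    exact Finset.sum_congr rfl fun c _ => (outer_sum _ _ _ _).symm
  -- E2 : time term
  have hE2 : (∑ i, ∑ j ∈ Finset.univ.filter (fun j => tA j = tA i), m2Mat μ (Y i) (Y j))
      - (∑ i, ∑ j ∈ Finset.univ.filter (fun j => tA j = tA i), covMat μ (Y i) (Y j))
      = ∑ c ∈ Finset.Icc 1 T,
          outerM (∑ i ∈ Finset.univ.filter (fun i => tA i = c), mV μ (Y i))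
            (∑ i ∈ Finset.univ.filter (fun i => tA i = c), mV μ (Y i)) := by
    rw [← Finset.sum_sub_distrib]
    have h1 : ∀ i : Fin n,
        (∑ j ∈ Finset.univ.filter (fun j => tA j = tA i), m2Mat μ (Y i) (Y j))
          - (∑ j ∈ Finset.univ.filter (fun j => tA j = tA i), covMat μ (Y i) (Y j))
          = ∑ j ∈ Finset.univ.filter (fun j => tA j = tA i),
              outerM (mV μ (Y i)) (mV μ (Y j)) := by
      intro i
      rw [← Finset.sum_sub_distrib]
      exact Finset.sum_congr rfl fun j _ => m2_sub_cov _ _ (hmem i) (hmem j)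
    rw [Finset.sum_congr rfl fun i _ => h1 i,
        regroup tA (Finset.Icc 1 T) htA
          (fun i j => outerM (mV μ (Y i)) (mV μ (Y j)))]
    exact Finset.sum_congr rfl fun c _ => (outer_sum _ _ _ _).symm
  -- E3 : cell term
  have hE3 : (∑ i, ∑ j ∈ Finset.univ.filter (fun j => g j = g i ∧ tA j = tA i),
        covMat μ (Y i) (Y j))
      = ∑ p ∈ (Finset.univ : Finset (Fin G)) ×ˢ Finset.Icc 1 T,
          covMat μ (fun ω a => ∑ i ∈ Finset.univ.filter (fun i => (g i, tA i) = p), Y i ω a)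
            (fun ω a => ∑ i ∈ Finset.univ.filter (fun i => (g i, tA i) = p), Y i ω a) := by
    have hfil : ∀ i : Fin n,
        Finset.univ.filter (fun j => g j = g i ∧ tA j = tA i)
          = Finset.univ.filter (fun j => (g j, tA j) = (g i, tA i)) := fun i =>
      Finset.filter_congr fun j _ => by simp [Prod.ext_iff]
    rw [Finset.sum_congr rfl fun i _ => by rw [hfil i],
        regroup (fun i => (g i, tA i)) ((Finset.univ : Finset (Fin G)) ×ˢ Finset.Icc 1 T)
          (fun i => Finset.mem_product.mpr ⟨Finset.mem_univ _, htA i⟩)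
          (fun i j => covMat μ (Y i) (Y j))]
    exact Finset.sum_congr rfl fun p _ =>
      (cov_sum _ _ Y Y (fun i _ => hmem i) (fun j _ => hmem j)).symm
  -- E4 : kernel term
  have hAm : ∀ m : ℕ,
      (∑ τ ∈ Finset.Icc 1 (T - m), m2Mat μ (timeAgg Y tA τ) (timeAgg Y tA (τ + m)))
        - (∑ τ ∈ Finset.Icc 1 (T - m), covMat μ (timeAgg Y tA τ) (timeAgg Y tA (τ + m)))
        = ∑ τ ∈ Finset.Icc 1 (T - m),
            outerM (mV μ (timeAgg Y tA τ)) (mV μ (timeAgg Y tA (τ + m))) := by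
    intro m
    rw [← Finset.sum_sub_distrib]
    exact Finset.sum_congr rfl fun τ _ => m2_sub_cov _ _ (hy τ) (hy (τ + m))
  have hBm : ∀ m : ℕ,
      (∑ τ ∈ Finset.Icc 1 (T - m), m2Mat μ (timeAgg Y tA (τ + m)) (timeAgg Y tA τ))
        - (∑ τ ∈ Finset.Icc 1 (T - m), covMat μ (timeAgg Y tA (τ + m)) (timeAgg Y tA τ))
        = ∑ τ ∈ Finset.Icc 1 (T - m),
            outerM (mV μ (timeAgg Y tA (τ + m))) (mV μ (timeAgg Y tA τ)) := by
    intro m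
    rw [← Finset.sum_sub_distrib]
    exact Finset.sum_congr rfl fun τ _ => m2_sub_cov _ _ (hy (τ + m)) (hy τ)
  have hE4 : (∑ m ∈ Finset.Icc 1 M, κ m •
        ((∑ τ ∈ Finset.Icc 1 (T - m), m2Mat μ (timeAgg Y tA τ) (timeAgg Y tA (τ + m)))
          + (∑ τ ∈ Finset.Icc 1 (T - m), m2Mat μ (timeAgg Y tA (τ + m)) (timeAgg Y tA τ))
          + 2 • ∑ τ ∈ Finset.Icc 1 T, m2Mat μ (timeAgg Y tA τ) (timeAgg Y tA τ)))
      - (∑ m ∈ Finset.Icc 1 M, κ m •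
        ((∑ τ ∈ Finset.Icc 1 (T - m), covMat μ (timeAgg Y tA τ) (timeAgg Y tA (τ + m)))
          + (∑ τ ∈ Finset.Icc 1 (T - m), covMat μ (timeAgg Y tA (τ + m)) (timeAgg Y tA τ))))
      = ∑ m ∈ Finset.Icc 1 M, κ m •
          ((∑ τ ∈ Finset.Icc 1 (T - m),
              outerM (mV μ (timeAgg Y tA τ)) (mV μ (timeAgg Y tA (τ + m))))
            + (∑ τ ∈ Finset.Icc 1 (T - m),
                outerM (mV μ (timeAgg Y tA (τ + m))) (mV μ (timeAgg Y tA τ)))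
            + 2 • ∑ τ ∈ Finset.Icc 1 T, m2Mat μ (timeAgg Y tA τ) (timeAgg Y tA τ)) := by
    rw [← Finset.sum_sub_distrib]
    refine Finset.sum_congr rfl fun m _ => ?_
    rw [← smul_sub]
    congr 1
    rw [← hAm m, ← hBm m]
    abel
  -- assemble
  have key :
      (((∑ i, ∑ j ∈ Finset.univ.filter (fun j => g j = g i), m2Mat μ (Y i) (Y j))
        + (∑ i, ∑ j ∈ Finset.univ.filter (fun j => tA j = tA i), m2Mat μ (Y i) (Y j))
        + ∑ m ∈ Finset.Icc 1 M, κ m •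
            ((∑ τ ∈ Finset.Icc 1 (T - m), m2Mat μ (timeAgg Y tA τ) (timeAgg Y tA (τ + m)))
              + (∑ τ ∈ Finset.Icc 1 (T - m), m2Mat μ (timeAgg Y tA (τ + m)) (timeAgg Y tA τ))
              + 2 • ∑ τ ∈ Finset.Icc 1 T, m2Mat μ (timeAgg Y tA τ) (timeAgg Y tA τ)))
      - ((∑ i, ∑ j ∈ Finset.univ.filter (fun j => g j = g i), covMat μ (Y i) (Y j))
        + (∑ i, ∑ j ∈ Finset.univ.filter (fun j => tA j = tA i), covMat μ (Y i) (Y j))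
        - (∑ i, ∑ j ∈ Finset.univ.filter (fun j => g j = g i ∧ tA j = tA i),
            covMat μ (Y i) (Y j))
        + ∑ m ∈ Finset.Icc 1 M, κ m •
            ((∑ τ ∈ Finset.Icc 1 (T - m), covMat μ (timeAgg Y tA τ) (timeAgg Y tA (τ + m)))
              + (∑ τ ∈ Finset.Icc 1 (T - m),
                  covMat μ (timeAgg Y tA (τ + m)) (timeAgg Y tA τ)))))
      = (∑ c : Fin G, outerM (∑ i ∈ Finset.univ.filter (fun i => g i = c), mV μ (Y i))
            (∑ i ∈ Finset.univ.filter (fun i => g i = c), mV μ (Y i)))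
        + (∑ c ∈ Finset.Icc 1 T,
            outerM (∑ i ∈ Finset.univ.filter (fun i => tA i = c), mV μ (Y i))
              (∑ i ∈ Finset.univ.filter (fun i => tA i = c), mV μ (Y i)))
        + (∑ p ∈ (Finset.univ : Finset (Fin G)) ×ˢ Finset.Icc 1 T,
            covMat μ (fun ω a => ∑ i ∈ Finset.univ.filter (fun i => (g i, tA i) = p), Y i ω a)
              (fun ω a => ∑ i ∈ Finset.univ.filter (fun i => (g i, tA i) = p), Y i ω a))
        + ∑ m ∈ Finset.Icc 1 M, κ m •
            ((∑ τ ∈ Finset.Icc 1 (T - m),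
                outerM (mV μ (timeAgg Y tA τ)) (mV μ (timeAgg Y tA (τ + m))))
              + (∑ τ ∈ Finset.Icc 1 (T - m),
                  outerM (mV μ (timeAgg Y tA (τ + m))) (mV μ (timeAgg Y tA τ)))
              + 2 • ∑ τ ∈ Finset.Icc 1 T, m2Mat μ (timeAgg Y tA τ) (timeAgg Y tA τ)) := by
    rw [← hE1, ← hE2, ← hE3, ← hE4]
    abel
  rw [key]
  refine psd_add (psd_add (psd_add ?_ ?_) ?_) ?_
  · exact psd_sum _ _ fun c _ => outer_psd _
  · exact psd_sum _ _ fun c _ => outer_psd _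
  · exact psd_sum _ _ fun p _ =>
      covself_psd _ (fun a => memℒp_sumvec _ Y (fun i _ => hmem i) a)
  · refine psd_sum _ _ fun m hm => ?_
    have hm' := Finset.mem_Icc.mp hm
    exact psd_smul (Dpsd T (timeAgg Y tA) hy m hm'.1 (le_trans hm'.2 hM)) (hκ m)
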